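/- arXiv:0704.1466 — 2 statements merged into one kernel-verified Lean document; each statement's English description precedes it below -/
import Mathlib

section
/- In the Gaussian location model, if θ̂_n satisfies P_{n,0}(θ̂_n = 0) → 1, then for any fixed ρ > 0, liminf_{n→∞} sup_{|θ| < ρ/√n} E_{n,θ}[n(θ̂_n − θ)²] ≥ ρ². -/
open scoped ENNReal

open MeasureTheory ProbabilityTheory Filter Topology

/-- Joint law of a sample of size `n` of i.i.d. `N(θ,1)` observations. -/
noncomputable def gaussP (n : ℕ) (θ : ℝ) : Measure (Fin n → ℝ) :=
  Measure.pi fun _ => gaussianReal θ 1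

lemma lintegral_pi_fin_prod : ∀ (n : ℕ) (μ : Fin n → Measure ℝ), (∀ i, SigmaFinite (μ i)) →
    ∀ (f : Fin n → ℝ → ℝ≥0∞), (∀ i, Measurable (f i)) →
    ∫⁻ y, ∏ i, f i (y i) ∂(Measure.pi μ) = ∏ i, ∫⁻ x, f i x ∂(μ i) := by
  intro n
  induction n with
  | zero => intro μ _ f _; simp
  | succ n ih =>
    intro μ hσ f hf
    haveI := hσ
    have hmp := (measurePreserving_piFinSuccAbove μ 0).symm
    rw [← hmp.map_eq, lintegral_map (by fun_prop) (MeasurableEquiv.measurable _)]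
    simp_rw [MeasurableEquiv.piFinSuccAbove_symm_apply, Fin.insertNthEquiv,
      Fin.prod_univ_succ, Fin.insertNth_zero, Equiv.coe_fn_mk, Fin.cons_zero, Fin.cons_succ, Fin.zero_succAbove, cast_eq]
    rw [lintegral_prod_mul (f := f 0) (g := fun xs : Fin n → ℝ => ∏ i, f i.succ (xs i)) (hf 0).aemeasurable (Finset.measurable_prod Finset.univ (fun i _ => (hf i.succ).comp (measurable_pi_apply i))).aemeasurable]
    rw [ih _ (fun i => hσ _) _ (fun i => hf _)]

lemma pi_withDensity {n : ℕ} (μ : Fin n → Measure ℝ) [∀ i, SigmaFinite (μ i)]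
    (f : Fin n → ℝ → ℝ≥0∞) (hf : ∀ i, Measurable (f i))
    [∀ i, SigmaFinite ((μ i).withDensity (f i))] :
    Measure.pi (fun i => (μ i).withDensity (f i))
      = (Measure.pi μ).withDensity (fun y => ∏ i, f i (y i)) := by
  refine Measure.pi_eq fun s hs => ?_
  rw [withDensity_apply _ (MeasurableSet.univ_pi hs),
    ← lintegral_indicator (MeasurableSet.univ_pi hs)]
  have : ∀ y : Fin n → ℝ, (Set.pi Set.univ s).indicator (fun y => ∏ i, f i (y i)) y
      = ∏ i, (s i).indicator (f i) (y i) := by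
    intro y
    by_cases h : y ∈ Set.pi Set.univ s
    · rw [Set.indicator_of_mem h]
      exact Finset.prod_congr rfl fun i _ => (Set.indicator_of_mem (h i trivial) _).symm
    · rw [Set.indicator_of_notMem h]
      simp only [Set.mem_pi, Set.mem_univ, true_implies] at h
      push_neg at h
      obtain ⟨i, hi⟩ := h
      exact (Finset.prod_eq_zero (Finset.mem_univ i) (Set.indicator_of_notMem hi _)).symm
  simp_rw [this]
  rw [lintegral_pi_fin_prod n μ inferInstance _
    (fun i => (hf i).indicator (hs i))]
  exact Finset.prod_congr rfl fun i _ => by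
    rw [lintegral_indicator (hs i), withDensity_apply _ (hs i)]

noncomputable def lfun (θ : ℝ) (x : ℝ) : ℝ≥0∞ := ENNReal.ofReal (Real.exp (θ*x - θ^2/2))

lemma lfun_meas (θ : ℝ) : Measurable (lfun θ) := by
  unfold lfun; fun_prop

lemma pdf_mul (θ : ℝ) (x : ℝ) :
    gaussianPDF θ 1 x = gaussianPDF 0 1 x * lfun θ x := by
  rw [gaussianPDF, gaussianPDF, lfun, ← ENNReal.ofReal_mul (gaussianPDFReal_nonneg _ _ _)]
  congr 1
  simp only [gaussianPDFReal, NNReal.coe_one, mul_one]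
  rw [mul_assoc, ← Real.exp_add]
  congr 1
  ring_nf

lemma gauss_tilt (θ : ℝ) :
    gaussianReal θ 1 = (gaussianReal 0 1).withDensity (lfun θ) := by
  rw [gaussianReal_of_var_ne_zero _ one_ne_zero, gaussianReal_of_var_ne_zero _ one_ne_zero,
    ← withDensity_mul _ (measurable_gaussianPDF 0 1) (lfun_meas θ)]
  congr 1
  ext x
  exact pdf_mul θ x

lemma lint_lfun_sq (θ : ℝ) :
    ∫⁻ x, (lfun θ x)^2 ∂(gaussianReal 0 1) = ENNReal.ofReal (Real.exp (θ^2)) := by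
  rw [gaussianReal_of_var_ne_zero _ one_ne_zero,
    lintegral_withDensity_eq_lintegral_mul _ (measurable_gaussianPDF 0 1)
      ((lfun_meas θ).pow_const 2)]
  have : ∀ x, (gaussianPDF 0 1 * fun x => (lfun θ x)^2) x
      = ENNReal.ofReal (Real.exp (θ^2)) * gaussianPDF (2*θ) 1 x := by
    intro x
    simp only [Pi.mul_apply, gaussianPDF, lfun,
      ← ENNReal.ofReal_pow (Real.exp_nonneg _), ← ENNReal.ofReal_mul (gaussianPDFReal_nonneg _ _ _),
      ← ENNReal.ofReal_mul (Real.exp_nonneg _)]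
    congr 1
    simp only [gaussianPDFReal, NNReal.coe_one, mul_one, ← Real.exp_nat_mul, ← Real.exp_add]
    rw [mul_assoc, ← Real.exp_add, mul_comm (Real.exp _), mul_assoc, ← Real.exp_add]
    congr 1
    ring_nf
  simp_rw [this]
  rw [lintegral_const_mul _ (measurable_gaussianPDF _ 1)]
  rw [show (gaussianPDF (2*θ) 1) = fun x => ENNReal.ofReal (gaussianPDFReal (2*θ) 1 x) from rfl,
    lintegral_gaussianPDFReal_eq_one _ one_ne_zero, mul_one]

lemma gaussP_tilt (n : ℕ) (θ : ℝ) :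
    gaussP n θ = (gaussP n 0).withDensity (fun y => ∏ i, lfun θ (y i)) := by
  haveI : ∀ i : Fin n, SigmaFinite ((gaussianReal 0 1).withDensity (lfun θ)) := by
    intro i; rw [← gauss_tilt]; infer_instance
  rw [gaussP, gaussP]
  calc Measure.pi (fun _ : Fin n => gaussianReal θ 1)
      = Measure.pi (fun _ : Fin n => (gaussianReal 0 1).withDensity (lfun θ)) := by
        simp_rw [← gauss_tilt]
    _ = _ := @pi_withDensity n (fun _ => gaussianReal 0 1) _ (fun _ => lfun θ) (fun _ => lfun_meas θ) (fun i => this i)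

lemma lint_L_sq (n : ℕ) (θ : ℝ) :
    ∫⁻ y, (∏ i, lfun θ (y i))^(2:ℝ) ∂(gaussP n 0)
      = ENNReal.ofReal (Real.exp (n*θ^2)) := by
  have h2 : ∀ a : ℝ≥0∞, a ^ (2:ℝ) = a^(2:ℕ) := fun a => by
    rw [← ENNReal.rpow_natCast a 2]; norm_num
  simp_rw [h2, ← Finset.prod_pow]
  rw [gaussP, lintegral_pi_fin_prod n _ inferInstance _
    (fun i => (lfun_meas θ).pow_const 2)]
  simp_rw [lint_lfun_sq θ]
  rw [Finset.prod_const, ← ENNReal.ofReal_pow (Real.exp_nonneg _), ← Real.exp_nat_mul]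
  simp [mul_comm]

lemma contig_bound (n : ℕ) (θ : ℝ) {B : Set (Fin n → ℝ)} (hB : MeasurableSet B) :
    gaussP n θ B ≤ (ENNReal.ofReal (Real.exp (n*θ^2)))^(1/2:ℝ) * (gaussP n 0 B)^(1/2:ℝ) := by
  have hL : Measurable (fun y : Fin n → ℝ => ∏ i, lfun θ (y i)) :=
    Finset.measurable_prod _ (fun i _ => (lfun_meas θ).comp (measurable_pi_apply i))
  have key : gaussP n θ B = ∫⁻ y, (B.indicator (1 : (Fin n → ℝ) → ℝ≥0∞) * fun z : Fin n → ℝ => ∏ i, lfun θ (z i)) y ∂(gaussP n 0) := by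
    rw [gaussP_tilt, withDensity_apply _ hB, ← lintegral_indicator hB]
    congr 1
    ext y
    by_cases h : y ∈ B <;>
      simp [Set.indicator_of_mem, Set.indicator_of_notMem, h]
  rw [key]
  refine le_trans (ENNReal.lintegral_mul_le_Lp_mul_Lq _ (p := 2) (q := 2)
    ⟨by norm_num, by norm_num, by norm_num⟩ ((measurable_one.indicator hB).aemeasurable) hL.aemeasurable) ?_
  rw [lint_L_sq, mul_comm]
  gcongr
  have : ∀ y, (B.indicator (1 : (Fin n → ℝ) → ℝ≥0∞) y) ^ (2:ℝ) = B.indicator 1 y := by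
    intro y
    by_cases h : y ∈ B <;> simp [Set.indicator_of_mem, Set.indicator_of_notMem, h]
  simp_rw [this]
  rw [lintegral_indicator hB]
  simp

instance (n : ℕ) (θ : ℝ) : IsProbabilityMeasure (gaussP n θ) := by
  unfold gaussP; infer_instance

lemma contig (est : (n : ℕ) → (Fin n → ℝ) → ℝ) (hmeas : ∀ n, Measurable (est n))
    (hsparse : Tendsto (fun n => gaussP n 0 {y | est n y = 0}) atTop (𝓝 1))
    (s : ℝ) :
    Tendsto (fun n => gaussP n (s / Real.sqrt n) {y | est n y = 0}) atTop (𝓝 1) := by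
  have hA : ∀ n, MeasurableSet {y : Fin n → ℝ | est n y = 0} :=
    fun n => (hmeas n) (measurableSet_singleton 0)
  set c := (ENNReal.ofReal (Real.exp (s^2)))^(1/2:ℝ) with hc
  have hcne : c ≠ ⊤ := by
    rw [hc]
    exact ENNReal.rpow_ne_top_of_nonneg (by norm_num) ENNReal.ofReal_ne_top
  -- compl tends to 0
  have hcompl0 : Tendsto (fun n => gaussP n 0 {y : Fin n → ℝ | est n y = 0}ᶜ) atTop (𝓝 0) := by
    have : ∀ n, gaussP n 0 {y : Fin n → ℝ | est n y = 0}ᶜ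
        = 1 - gaussP n 0 {y : Fin n → ℝ | est n y = 0} := fun n =>
      prob_compl_eq_one_sub (hA n)
    simp_rw [this]
    simpa using ENNReal.Tendsto.sub (tendsto_const_nhds (x := (1:ℝ≥0∞))) hsparse (Or.inl ENNReal.one_ne_top)
  have hbound : ∀ n : ℕ, 1 ≤ n → gaussP n (s / Real.sqrt n) {y : Fin n → ℝ | est n y = 0}ᶜ
      ≤ c * (gaussP n 0 {y : Fin n → ℝ | est n y = 0}ᶜ)^(1/2:ℝ) := by
    intro n hn
    have hsq : (n : ℝ) * (s / Real.sqrt n)^2 = s^2 := by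
      rw [div_pow, Real.sq_sqrt (Nat.cast_nonneg n)]
      field_simp
    have := contig_bound n (s / Real.sqrt n) (hA n).compl
    rwa [hsq] at this
  have htend : Tendsto (fun n => c * (gaussP n 0 {y : Fin n → ℝ | est n y = 0}ᶜ)^(1/2:ℝ))
      atTop (𝓝 0) := by
    have h1 : Tendsto (fun n => (gaussP n 0 {y : Fin n → ℝ | est n y = 0}ᶜ)^(1/2:ℝ))
        atTop (𝓝 0) := by
      have := (ENNReal.continuous_rpow_const (y := (1/2:ℝ))).continuousAt (x := 0)
      have h0 : ((0:ℝ≥0∞)) ^ (1/2:ℝ) = 0 := by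
        rw [ENNReal.zero_rpow_of_pos]; norm_num
      simpa [h0, Function.comp_def] using (this.tendsto.comp hcompl0)
    simpa using ENNReal.Tendsto.const_mul h1 (Or.inr hcne)
  have hcompl : Tendsto (fun n => gaussP n (s / Real.sqrt n) {y : Fin n → ℝ | est n y = 0}ᶜ)
      atTop (𝓝 0) := by
    refine tendsto_of_tendsto_of_tendsto_of_le_of_le' tendsto_const_nhds htend
      (Eventually.of_forall fun n => zero_le) ?_
    filter_upwards [eventually_ge_atTop 1] with n hn using hbound n hn
  have : ∀ n, gaussP n (s / Real.sqrt n) {y : Fin n → ℝ | est n y = 0}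
      = 1 - gaussP n (s / Real.sqrt n) {y : Fin n → ℝ | est n y = 0}ᶜ := by
    intro n
    rw [prob_compl_eq_one_sub (hA n), ENNReal.sub_sub_cancel ENNReal.one_ne_top prob_le_one]
  simp_rw [this]
  simpa using ENNReal.Tendsto.sub (tendsto_const_nhds (x := (1:ℝ≥0∞))) hcompl (Or.inl ENNReal.one_ne_top)

theorem stmt_11
    (est : (n : ℕ) → (Fin n → ℝ) → ℝ)
    (hmeas : ∀ n, Measurable (est n))
    (hsparse : Tendsto (fun n => gaussP n 0 {y | est n y = 0}) atTop (𝓝 1))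
    (ρ : ℝ) (hρ : 0 < ρ) :
    ENNReal.ofReal (ρ ^ 2) ≤
      Filter.liminf (fun n : ℕ => ⨆ θ : ℝ, ⨆ _ : |θ| < ρ / Real.sqrt n,
        ∫⁻ y, ENNReal.ofReal ((n : ℝ) * (est n y - θ) ^ 2) ∂(gaussP n θ)) atTop := by
  set F := fun n : ℕ => ⨆ θ : ℝ, ⨆ _ : |θ| < ρ / Real.sqrt n,
        ∫⁻ y, ENNReal.ofReal ((n : ℝ) * (est n y - θ) ^ 2) ∂(gaussP n θ) with hF
  have hA : ∀ n, MeasurableSet {y : Fin n → ℝ | est n y = 0} :=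
    fun n => (hmeas n) (measurableSet_singleton 0)
  -- Step 2: fixed s ∈ (0, ρ)
  have step2 : ∀ s : ℝ, 0 < s → s < ρ → ENNReal.ofReal (s^2) ≤ Filter.liminf F atTop := by
    intro s hs hsρ
    have hP := contig est hmeas hsparse s
    have hlow : ∀ᶠ n in atTop, ENNReal.ofReal (s^2) *
        gaussP n (s / Real.sqrt n) {y : Fin n → ℝ | est n y = 0} ≤ F n := by
      filter_upwards [eventually_ge_atTop 1] with n hn
      set θ := s / Real.sqrt n with hθ
      have hsqn : (0:ℝ) < Real.sqrt n := Real.sqrt_pos.mpr (by exact_mod_cast hn)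
      have habs : |θ| < ρ / Real.sqrt n := by
        rw [hθ, abs_of_pos (div_pos hs hsqn)]
        exact div_lt_div_of_pos_right hsρ hsqn
      have hsq : (n : ℝ) * θ^2 = s^2 := by
        rw [hθ, div_pow, Real.sq_sqrt (Nat.cast_nonneg n)]
        field_simp
      have key : ENNReal.ofReal (s^2) * gaussP n θ {y : Fin n → ℝ | est n y = 0}
          ≤ ∫⁻ y, ENNReal.ofReal ((n : ℝ) * (est n y - θ) ^ 2) ∂(gaussP n θ) := by
        have : ∫⁻ y in {y : Fin n → ℝ | est n y = 0},
            ENNReal.ofReal ((n : ℝ) * (est n y - θ) ^ 2) ∂(gaussP n θ)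
            = ENNReal.ofReal (s^2) * gaussP n θ {y : Fin n → ℝ | est n y = 0} := by
          rw [setLIntegral_congr_fun (hA n) (fun y hy => by
            simp only [Set.mem_setOf_eq] at hy
            rw [hy, zero_sub, neg_sq, hsq])]
          simp [lintegral_const, Measure.restrict_apply MeasurableSet.univ]
        rw [← this]
        exact setLIntegral_le_lintegral _ _
      refine le_trans key ?_
      exact le_iSup_of_le θ (le_iSup_of_le habs le_rfl)
    have htend : Tendsto (fun n => ENNReal.ofReal (s^2) *
        gaussP n (s / Real.sqrt n) {y : Fin n → ℝ | est n y = 0}) atTop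
        (𝓝 (ENNReal.ofReal (s^2))) := by
      simpa using ENNReal.Tendsto.const_mul hP (Or.inr ENNReal.ofReal_ne_top)
    calc ENNReal.ofReal (s^2)
        = Filter.liminf (fun n => ENNReal.ofReal (s^2) *
            gaussP n (s / Real.sqrt n) {y : Fin n → ℝ | est n y = 0}) atTop :=
          (htend.liminf_eq).symm
      _ ≤ Filter.liminf F atTop := liminf_le_liminf hlow
  -- Step 3: s ↑ ρ
  have hseq : Tendsto (fun k : ℕ => ENNReal.ofReal ((ρ - ρ/(k+1))^2)) atTop
      (𝓝 (ENNReal.ofReal (ρ^2))) := by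
    have h0 : Tendsto (fun k : ℕ => ρ/((k:ℝ)+1)) atTop (𝓝 0) := by
      apply Tendsto.div_atTop tendsto_const_nhds
      exact tendsto_atTop_add_const_right _ _ tendsto_natCast_atTop_atTop
    have : Tendsto (fun k : ℕ => (ρ - ρ/(k+1))^2) atTop (𝓝 (ρ^2)) := by
      have := (tendsto_const_nhds (x := ρ)).sub h0
      simpa using (this.pow 2)
    exact (ENNReal.continuous_ofReal.tendsto _).comp this
  refine le_of_tendsto hseq ?_
  filter_upwards [eventually_ge_atTop 1] with k hk
  have hk1 : (1:ℝ) < (k:ℝ) + 1 := by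
    have : (1:ℝ) ≤ (k:ℝ) := by exact_mod_cast hk
    linarith
  refine step2 _ ?_ ?_
  · have : ρ/((k:ℝ)+1) < ρ := by
      rw [div_lt_iff₀ (by linarith)]
      nlinarith
    linarith
  · have : 0 < ρ/((k:ℝ)+1) := div_pos hρ (by linarith)
    linarith
end

section
/- In the Gaussian location model, any consistent estimator sequence θ̂_n satisfying P_{n,θ}(θ̂_n = 0) → 1 for θ = 0 cannot be uniformly √n-consistent: there is no constant M such that sup_{θ∈ℝ} P_{n,θ}(√n|θ̂_n − θ| > M) → 0. -/
open MeasureTheory ProbabilityTheory Filter Topology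
open Real
open scoped ENNReal NNReal

lemma lintegral_pi_prod : ∀ (n : ℕ) (μ : Fin n → Measure ℝ), (∀ i, SigmaFinite (μ i)) →
    ∀ (f : Fin n → ℝ → ℝ≥0∞), (∀ i, Measurable (f i)) →
    ∫⁻ y, ∏ i, f i (y i) ∂Measure.pi μ = ∏ i, ∫⁻ x, f i x ∂μ i := by
  intro n
  induction n with
  | zero =>
    intro μ _ f hf
    simp [Measure.pi_empty_univ]
  | succ n ih =>
    intro μ hσ f hf
    have := hσ
    have hmp := (MeasureTheory.measurePreserving_piFinSuccAbove μ 0).symm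
    rw [← hmp.lintegral_comp_emb (MeasurableEquiv.measurableEmbedding _)]
    simp_rw [MeasurableEquiv.piFinSuccAbove_symm_apply, Fin.insertNthEquiv,
      Fin.prod_univ_succ, Fin.insertNth_zero]
    simp only [Fin.zero_succAbove, Equiv.coe_fn_mk, Fin.cons_zero, Fin.cons_succ, cast_eq]
    have hG : Measurable fun a : Fin n → ℝ => ∏ x : Fin n, f x.succ (a x) :=
      Finset.measurable_prod _ (fun i _ => (hf _).comp (measurable_pi_apply i))
    rw [MeasureTheory.lintegral_prod_mul (hf 0).aemeasurable hG.aemeasurable,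
      ih _ (fun i => hσ _) _ (fun i => hf _)]

lemma gaussP_eq (n : ℕ) (θ : ℝ) :
    gaussP n θ = (Measure.pi fun _ : Fin n => (volume : Measure ℝ)).withDensity
      (fun y => ∏ i, gaussianPDF θ 1 (y i)) := by
  refine Measure.pi_eq fun s hs => ?_
  rw [withDensity_apply _ (MeasurableSet.univ_pi hs)]
  rw [← lintegral_indicator (MeasurableSet.univ_pi hs)]
  have : ∀ y : Fin n → ℝ, (Set.univ.pi s).indicator (fun y => ∏ i, gaussianPDF θ 1 (y i)) y
      = ∏ i, (s i).indicator (gaussianPDF θ 1) (y i) := by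
    intro y
    by_cases h : y ∈ Set.univ.pi s
    · rw [Set.indicator_of_mem h]
      refine Finset.prod_congr rfl fun i _ => ?_
      rw [Set.indicator_of_mem (h i (Set.mem_univ i))]
    · rw [Set.indicator_of_notMem h]
      rw [Set.mem_univ_pi] at h
      push_neg at h
      obtain ⟨i, hi⟩ := h
      exact (Finset.prod_eq_zero (Finset.mem_univ i) (Set.indicator_of_notMem hi _)).symm
  simp_rw [this]
  rw [lintegral_pi_prod n _ (fun i => inferInstance) _
    (fun i => (measurable_gaussianPDF θ 1).indicator (hs i))]
  refine Finset.prod_congr rfl fun i _ => ?_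
  rw [gaussianReal_apply θ one_ne_zero (s i), ← lintegral_indicator (hs i)]

lemma pdf_sq (θ x : ℝ) :
    gaussianPDFReal 0 1 x ^ 2
      = rexp (θ ^ 2) * (gaussianPDFReal θ 1 x * gaussianPDFReal (-θ) 1 x) := by
  simp only [gaussianPDFReal, NNReal.coe_one, mul_one]
  have h1 : rexp (-(x - 0) ^ 2 / 2) ^ 2 = rexp (-(x - 0) ^ 2) := by
    rw [← Real.exp_nat_mul]; ring_nf
  have h2 : rexp (θ ^ 2) * (rexp (-(x - θ) ^ 2 / 2) * rexp (-(x - -θ) ^ 2 / 2))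
      = rexp (-(x - 0) ^ 2) := by
    rw [← Real.exp_add, ← Real.exp_add]; ring_nf
  rw [mul_pow, h1, ← h2]; ring

lemma pdfE_sq (θ x : ℝ) :
    gaussianPDF 0 1 x ^ 2
      = ENNReal.ofReal (rexp (θ ^ 2)) * (gaussianPDF θ 1 x * gaussianPDF (-θ) 1 x) := by
  simp only [gaussianPDF]
  rw [← ENNReal.ofReal_pow (gaussianPDFReal_nonneg 0 1 x),
    ← ENNReal.ofReal_mul (gaussianPDFReal_nonneg θ 1 x),
    ← ENNReal.ofReal_mul (Real.exp_nonneg _), pdf_sq]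

lemma key_bound (n : ℕ) (θ : ℝ) (A : Set (Fin n → ℝ)) (hA : MeasurableSet A) :
    gaussP n 0 A ^ 2 ≤ ENNReal.ofReal (rexp (n * θ ^ 2)) * gaussP n θ A := by
  set Λ := Measure.pi fun _ : Fin n => (volume : Measure ℝ) with hΛ
  set E := ENNReal.ofReal (rexp (n * θ ^ 2)) with hE
  have hmeasf : ∀ τ : ℝ, Measurable (fun y : Fin n → ℝ => ∏ i, gaussianPDF τ 1 (y i)) :=
    fun τ => Finset.measurable_prod _ (fun i _ =>
      (measurable_gaussianPDF τ 1).comp (measurable_pi_apply i))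
  have happ : ∀ τ : ℝ, gaussP n τ A
      = ∫⁻ y, A.indicator (fun y => ∏ i, gaussianPDF τ 1 (y i)) y ∂Λ := by
    intro τ
    rw [gaussP_eq, withDensity_apply _ hA, ← lintegral_indicator hA]
  -- pointwise bound
  have hpt : ∀ y, A.indicator (fun y => ∏ i, gaussianPDF 0 1 (y i)) y
      = E ^ (1/2 : ℝ) *
        ((A.indicator (fun y => ∏ i, gaussianPDF θ 1 (y i)) y) ^ (1/2 : ℝ) *
         (A.indicator (fun y => ∏ i, gaussianPDF (-θ) 1 (y i)) y) ^ (1/2 : ℝ)) := by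
    intro y
    by_cases h : y ∈ A
    · simp only [Set.indicator_of_mem h]
      have hsq : (∏ i, gaussianPDF 0 1 (y i)) ^ (2 : ℕ)
          = E * ((∏ i, gaussianPDF θ 1 (y i)) * (∏ i, gaussianPDF (-θ) 1 (y i))) := by
        rw [← Finset.prod_pow]
        simp_rw [pdfE_sq θ]
        rw [Finset.prod_mul_distrib, Finset.prod_const, Finset.prod_mul_distrib,
          Finset.card_univ, Fintype.card_fin, ← ENNReal.ofReal_pow (Real.exp_nonneg _),
          ← Real.exp_nat_mul, hE]
      have collapse : ∀ x : ℝ≥0∞, (x ^ (2 : ℕ)) ^ (1/2 : ℝ) = x := by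
        intro x
        rw [← ENNReal.rpow_natCast x 2, ← ENNReal.rpow_mul]
        norm_num
      calc (∏ i, gaussianPDF 0 1 (y i))
          = ((∏ i, gaussianPDF 0 1 (y i)) ^ (2:ℕ)) ^ (1/2:ℝ) := (collapse _).symm
        _ = (E * ((∏ i, gaussianPDF θ 1 (y i)) * (∏ i, gaussianPDF (-θ) 1 (y i)))) ^ (1/2:ℝ) := by
            rw [hsq]
        _ = E ^ (1/2:ℝ) * ((∏ i, gaussianPDF θ 1 (y i)) ^ (1/2:ℝ) *
              (∏ i, gaussianPDF (-θ) 1 (y i)) ^ (1/2:ℝ)) := by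
            rw [ENNReal.mul_rpow_of_nonneg _ _ (by norm_num : (0:ℝ) ≤ 1/2),
              ENNReal.mul_rpow_of_nonneg _ _ (by norm_num : (0:ℝ) ≤ 1/2)]
    · simp [Set.indicator_of_notMem h, ENNReal.zero_rpow_of_pos (by norm_num : (0:ℝ) < 1/2)]
  -- integrate
  have hconj : Real.HolderConjugate 2 2 := Real.HolderConjugate.two_two
  have hmg : ∀ τ : ℝ, Measurable fun y : Fin n → ℝ =>
      (A.indicator (fun y => ∏ i, gaussianPDF τ 1 (y i)) y) ^ (1/2 : ℝ) :=
    fun τ => ENNReal.continuous_rpow_const.measurable.comp ((hmeasf τ).indicator hA)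
  have hCS := ENNReal.lintegral_mul_le_Lp_mul_Lq Λ hconj
    (f := fun y => (A.indicator (fun y => ∏ i, gaussianPDF θ 1 (y i)) y) ^ (1/2 : ℝ))
    (g := fun y => (A.indicator (fun y => ∏ i, gaussianPDF (-θ) 1 (y i)) y) ^ (1/2 : ℝ))
    (hmg θ).aemeasurable (hmg (-θ)).aemeasurable
  have hcollapse2 : ∀ x : ℝ≥0∞, (x ^ (1/2:ℝ)) ^ (2:ℝ) = x := by
    intro x
    rw [← ENNReal.rpow_mul]
    norm_num
  simp_rw [Pi.mul_apply, hcollapse2] at hCS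
  have hlhs : gaussP n 0 A ≤ E ^ (1/2:ℝ) *
      ((gaussP n θ A) ^ (1/2:ℝ) * (gaussP n (-θ) A) ^ (1/2:ℝ)) := by
    rw [happ 0]
    simp_rw [hpt]
    rw [lintegral_const_mul _ (((hmg θ).mul (hmg (-θ))) : Measurable fun y => _ * _)]
    refine mul_le_mul_right ?_ _
    calc ∫⁻ y, (A.indicator (fun y => ∏ i, gaussianPDF θ 1 (y i)) y) ^ (1/2:ℝ) *
          (A.indicator (fun y => ∏ i, gaussianPDF (-θ) 1 (y i)) y) ^ (1/2:ℝ) ∂Λ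
        ≤ (∫⁻ y, A.indicator (fun y => ∏ i, gaussianPDF θ 1 (y i)) y ∂Λ) ^ (1/2:ℝ) *
          (∫⁻ y, A.indicator (fun y => ∏ i, gaussianPDF (-θ) 1 (y i)) y ∂Λ) ^ (1/2:ℝ) := hCS
      _ = (gaussP n θ A) ^ (1/2:ℝ) * (gaussP n (-θ) A) ^ (1/2:ℝ) := by
          rw [← happ θ, ← happ (-θ)]
  have hprob : ∀ τ : ℝ, gaussP n τ A ≤ 1 := by
    intro τ
    have : IsProbabilityMeasure (gaussP n τ) := by unfold gaussP; infer_instance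
    exact prob_le_one
  have hone : (gaussP n (-θ) A) ^ (1/2:ℝ) ≤ 1 := by
    calc (gaussP n (-θ) A) ^ (1/2:ℝ) ≤ (1:ℝ≥0∞) ^ (1/2:ℝ) :=
          ENNReal.rpow_le_rpow (hprob _) (by norm_num)
      _ = 1 := ENNReal.one_rpow _
  have hlhs' : gaussP n 0 A ≤ E ^ (1/2:ℝ) * (gaussP n θ A) ^ (1/2:ℝ) := by
    refine hlhs.trans ?_
    calc E ^ (1/2:ℝ) * ((gaussP n θ A) ^ (1/2:ℝ) * (gaussP n (-θ) A) ^ (1/2:ℝ))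
        ≤ E ^ (1/2:ℝ) * ((gaussP n θ A) ^ (1/2:ℝ) * 1) :=
          mul_le_mul_right (mul_le_mul_right hone _) _
      _ = E ^ (1/2:ℝ) * (gaussP n θ A) ^ (1/2:ℝ) := by rw [mul_one]
  have hsqc : ∀ x : ℝ≥0∞, (x ^ (1/2:ℝ)) ^ (2:ℕ) = x := by
    intro x
    rw [← ENNReal.rpow_natCast _ 2, ← ENNReal.rpow_mul]
    norm_num
  calc gaussP n 0 A ^ 2 ≤ (E ^ (1/2:ℝ) * (gaussP n θ A) ^ (1/2:ℝ)) ^ 2 :=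
        pow_le_pow_left' hlhs' 2
    _ = E * gaussP n θ A := by rw [mul_pow, hsqc, hsqc]

theorem stmt_13
    (est : (n : ℕ) → (Fin n → ℝ) → ℝ)
    (hmeas : ∀ n, Measurable (est n))
    (hconsistent : ∀ θ : ℝ, ∀ ε > (0 : ℝ),
      Tendsto (fun n => gaussP n θ {y | ε ≤ |est n y - θ|}) atTop (𝓝 0))
    (hsparse : Tendsto (fun n => gaussP n 0 {y | est n y = 0}) atTop (𝓝 1)) :
    ¬ ∃ M : ℝ, Tendsto (fun n : ℕ => ⨆ θ : ℝ,
        gaussP n θ {y | M < Real.sqrt n * |est n y - θ|}) atTop (𝓝 0) := by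
  rintro ⟨M, hM⟩
  set c : ℝ := |M| + 1 with hc
  have hc0 : 0 < c := by positivity
  have hMc : M < c := lt_of_le_of_lt (le_abs_self M) (by simp [hc])
  set δ : ℝ≥0∞ := ENNReal.ofReal (rexp (-(c ^ 2))) * (1/4) with hδ
  have hδ0 : 0 < δ := by
    apply ENNReal.mul_pos
    · exact (ENNReal.ofReal_pos.mpr (Real.exp_pos _)).ne'
    · norm_num
  have ev1 : ∀ᶠ n in atTop, (1/2 : ℝ≥0∞) < gaussP n 0 {y | est n y = 0} :=
    hsparse.eventually (lt_mem_nhds (by norm_num : (1/2:ℝ≥0∞) < 1))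
  have ev2 : ∀ᶠ n in atTop, (⨆ θ : ℝ,
      gaussP n θ {y | M < Real.sqrt n * |est n y - θ|}) < δ :=
    hM.eventually (gt_mem_nhds hδ0)
  have ev3 : ∀ᶠ n : ℕ in atTop, 1 ≤ n := eventually_ge_atTop 1
  obtain ⟨n, h1, h2⟩ := (ev1.and (ev2.and ev3)).exists
  obtain ⟨hsup, hn1⟩ := id h2
  clear ev1 ev2 ev3
  have hn0 : (0:ℝ) < n := by exact_mod_cast hn1
  have hsqrt : (0:ℝ) < Real.sqrt n := Real.sqrt_pos.mpr hn0
  set θn : ℝ := c / Real.sqrt n with hθn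
  have hA : MeasurableSet {y : Fin n → ℝ | est n y = 0} :=
    (hmeas n) (measurableSet_singleton 0)
  -- on the event, the estimator misses θn by more than M/√n
  have hsub : {y : Fin n → ℝ | est n y = 0}
      ⊆ {y | M < Real.sqrt n * |est n y - θn|} := by
    intro y hy
    simp only [Set.mem_setOf_eq] at hy ⊢
    rw [hy, zero_sub, abs_neg, abs_of_pos (by positivity : (0:ℝ) < θn), hθn,
      mul_div_cancel₀ _ hsqrt.ne']
    exact hMc
  -- exponent computation
  have hexp : (n : ℝ) * θn ^ 2 = c ^ 2 := by
    rw [hθn, div_pow, Real.sq_sqrt hn0.le]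
    field_simp
  -- lower bound for gaussP n θn on the event
  have hkey := key_bound n θn {y : Fin n → ℝ | est n y = 0} hA
  rw [hexp] at hkey
  have hquarter : (1/4 : ℝ≥0∞) ≤ ENNReal.ofReal (rexp (c ^ 2)) *
      gaussP n θn {y : Fin n → ℝ | est n y = 0} := by
    refine le_trans ?_ hkey
    calc (1/4 : ℝ≥0∞) = (1/2) ^ 2 := by
          rw [show (1/2 : ℝ≥0∞) = 2⁻¹ by norm_num, show (1/4 : ℝ≥0∞) = 4⁻¹ by norm_num,
            ← ENNReal.inv_pow, show ((2:ℝ≥0∞))^2 = 4 by norm_num]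
      _ ≤ gaussP n 0 {y : Fin n → ℝ | est n y = 0} ^ 2 := pow_le_pow_left' h1.le 2
  have hδle : δ ≤ gaussP n θn {y : Fin n → ℝ | est n y = 0} := by
    calc δ = ENNReal.ofReal (rexp (-(c ^ 2))) * (1/4) := hδ
      _ ≤ ENNReal.ofReal (rexp (-(c ^ 2))) * (ENNReal.ofReal (rexp (c ^ 2)) *
            gaussP n θn {y : Fin n → ℝ | est n y = 0}) := mul_le_mul_right hquarter _
      _ = (ENNReal.ofReal (rexp (-(c ^ 2))) * ENNReal.ofReal (rexp (c ^ 2))) *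
            gaussP n θn {y : Fin n → ℝ | est n y = 0} := by rw [mul_assoc]
      _ = gaussP n θn {y : Fin n → ℝ | est n y = 0} := by
          rw [← ENNReal.ofReal_mul (Real.exp_nonneg _), ← Real.exp_add, neg_add_cancel,
            Real.exp_zero, ENNReal.ofReal_one, one_mul]
  have : δ ≤ ⨆ θ : ℝ, gaussP n θ {y | M < Real.sqrt n * |est n y - θ|} := by
    refine le_trans (hδle.trans (measure_mono hsub)) ?_
    exact le_iSup (fun θ : ℝ => gaussP n θ {y | M < Real.sqrt n * |est n y - θ|}) θn
  exact absurd (this.trans_lt hsup) (lt_irrefl δ)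
end
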